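/- Up to isomorphism, there are exactly two simple ℤ/2-graded commutative algebras A over ℂ with even part A⁰ = ℂ·ε (ε acting as described) admitting a nontrivial odd derivation: the tiny Kaplansky superalgebra K₃ (with ε·b = (1/2)b) and its deformation with ε·b = (1/2)b + a; both are 3-dimensional with basis {ε; a, b}, ε·a = (1/2)a, and a·b = ε. -/

import Mathlib

/-- The family of 3-dimensional ℤ/2-graded commutative algebras on basis `{ε; a, b}`
(`ε` even, `a, b` odd) with `ε·ε = ε`, `ε·a = (1/2)a`, `ε·b = (1/2)b + λ·a`,
`a·b = ε`, written in coordinates `(x₁, x₂, x₃) = x₁ε + x₂a + x₃b`.  For `λ = 0`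
this is the tiny Kaplansky superalgebra `K₃`. -/
noncomputable def K3mulC (lam : ℂ) (x y : ℂ × ℂ × ℂ) : ℂ × ℂ × ℂ :=
  (x.1 * y.1 + x.2.1 * y.2.2 - x.2.2 * y.2.1,
   (1 / 2 : ℂ) * (x.1 * y.2.1 + x.2.1 * y.1) + lam * (x.1 * y.2.2 + x.2.2 * y.1),
   (1 / 2 : ℂ) * (x.1 * y.2.2 + x.2.2 * y.1))

noncomputable def K3bil (lam : ℂ) : (ℂ × ℂ × ℂ) →ₗ[ℂ] (ℂ × ℂ × ℂ) →ₗ[ℂ] (ℂ × ℂ × ℂ) :=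
  LinearMap.mk₂ ℂ (K3mulC lam)
    (by intro m₁ m₂ n; simp [K3mulC, Prod.ext_iff]; exact ⟨by ring, by ring, by ring⟩)
    (by intro c m n; simp [K3mulC, Prod.ext_iff, Prod.smul_def, smul_eq_mul]; exact ⟨by ring, by ring, by ring⟩)
    (by intro m n₁ n₂; simp [K3mulC, Prod.ext_iff]; exact ⟨by ring, by ring, by ring⟩)
    (by intro c m n; simp [K3mulC, Prod.ext_iff, Prod.smul_def, smul_eq_mul]; exact ⟨by ring, by ring, by ring⟩)

theorem K3bil_apply (lam : ℂ) (x y : ℂ × ℂ × ℂ) : K3bil lam x y = K3mulC lam x y := rfl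

noncomputable def tripleEquiv : (Fin 3 → ℂ) ≃ₗ[ℂ] ℂ × ℂ × ℂ where
  toFun g := (g 0, g 1, g 2)
  invFun x := ![x.1, x.2.1, x.2.2]
  map_add' g h := rfl
  map_smul' c g := rfl
  left_inv g := by funext i; fin_cases i <;> rfl
  right_inv x := rfl

section Main

variable {A : Type*} [AddCommGroup A] [Module ℂ A]

set_option maxHeartbeats 2000000 in
theorem part1
    (mul : A →ₗ[ℂ] A →ₗ[ℂ] A)
    (A0 A1 : Submodule ℂ A) (hcompl : IsCompl A0 A1)
    (h00 : ∀ x ∈ A0, ∀ y ∈ A0, mul x y ∈ A0)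
    (h01 : ∀ x ∈ A0, ∀ y ∈ A1, mul x y ∈ A1)
    (h10 : ∀ x ∈ A1, ∀ y ∈ A0, mul x y ∈ A1)
    (h11 : ∀ x ∈ A1, ∀ y ∈ A1, mul x y ∈ A0)
    (hcomm0 : ∀ x ∈ A0, ∀ y : A, mul x y = mul y x)
    (hcomm1 : ∀ x ∈ A1, ∀ y ∈ A1, mul x y = -mul y x)
    (ε : A) (hε0 : ε ≠ 0) (hA0 : A0 = Submodule.span ℂ {ε})
    (hεsq : mul ε ε = ε)
    (hsimple : ∀ I : Submodule ℂ A,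
      (∀ x ∈ I, ∀ y : A, mul x y ∈ I ∧ mul y x ∈ I) → I = ⊥ ∨ I = ⊤)
    (T : A →ₗ[ℂ] A)
    (hT0 : ∀ x ∈ A0, T x ∈ A1) (hT1 : ∀ x ∈ A1, T x ∈ A0)
    (hLeib0 : ∀ x ∈ A0, ∀ y : A, T (mul x y) = mul (T x) y + mul x (T y))
    (hLeib1 : ∀ x ∈ A1, ∀ y : A, T (mul x y) = mul (T x) y - mul x (T y))
    (hTne : T ≠ 0) :
    ∃ lam : ℂ, (lam = 0 ∨ lam = 1) ∧
      ∃ e : A ≃ₗ[ℂ] ℂ × ℂ × ℂ, ∀ x y : A, e (mul x y) = K3mulC lam (e x) (e y) := by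
  have two_ne : (2:ℂ) ≠ 0 := two_ne_zero
  have hεA0 : ε ∈ A0 := by rw [hA0]; exact Submodule.mem_span_singleton_self ε
  have hdisj : ∀ z : A, z ∈ A0 → z ∈ A1 → z = 0 :=
    fun z h1 h2 => Submodule.disjoint_def.mp hcompl.disjoint z h1 h2
  have hscal : ∀ z ∈ A0, ∃ c : ℂ, z = c • ε := by
    intro z hz
    rw [hA0, Submodule.mem_span_singleton] at hz
    obtain ⟨c, hc⟩ := hz
    exact ⟨c, hc.symm⟩
  have huniq : ∀ c c' : ℂ, c • ε = c' • ε → c = c' := by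
    intro c c' h
    have : (c - c') • ε = 0 := by rw [sub_smul, h, sub_self]
    rcases smul_eq_zero.mp this with h | h
    · exact sub_eq_zero.mp h
    · exact absurd h hε0
  have hdecomp : ∀ x : A, ∃ x0 ∈ A0, ∃ x1 ∈ A1, x = x0 + x1 := by
    intro x
    obtain ⟨y, z, hy, hz, h⟩ := Submodule.codisjoint_iff_exists_add_eq.mp hcompl.codisjoint x
    exact ⟨y, hy, z, hz, h.symm⟩
  -- some bilinearity conveniences
  have mull : ∀ (c : ℂ) (x y : A), mul (c • x) y = c • mul x y := by
    intro c x y; rw [map_smul]; rfl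
  have mulr : ∀ (c : ℂ) (x y : A), mul x (c • y) = c • mul x y := by
    intro c x y; rw [map_smul]
  have muladdl : ∀ (x y z : A), mul (x + y) z = mul x z + mul y z := by
    intro x y z; rw [map_add]; rfl
  have sqzero : ∀ x ∈ A1, mul x x = 0 := by
    intro x hx
    have h := hcomm1 x hx x hx
    have h2 : (2:ℂ) • mul x x = 0 := by
      rw [two_smul]; nth_rewrite 2 [h]; rw [add_neg_cancel]
    rcases smul_eq_zero.mp h2 with h | h
    · exact absurd h two_ne
    · exact h
  obtain ⟨b, hbdef⟩ : ∃ w : A, w = T ε := ⟨_, rfl⟩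
  have hbA1 : b ∈ A1 := hbdef ▸ hT0 ε hεA0
  have hLb : mul ε b = (2⁻¹ : ℂ) • b := by
    have h := hLeib0 ε hεA0 ε
    rw [hεsq] at h
    rw [← hcomm0 ε hεA0 (T ε)] at h
    rw [← hbdef] at h
    have h2 : b = (2:ℂ) • mul ε b := by rw [two_smul]; exact h
    have := congrArg (fun z => (2⁻¹:ℂ) • z) h2
    simp only [smul_smul] at this
    rw [inv_mul_cancel₀ two_ne, one_smul] at this
    exact this.symm
  have hTb : T b = 0 := by
    obtain ⟨cb, hcb⟩ := hscal _ (hT1 b hbA1)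
    have h := hLeib0 ε hεA0 b
    rw [← hbdef] at h
    rw [hLb, sqzero b hbA1, map_smul, hcb, map_smul, hεsq, zero_add] at h
    rw [smul_smul] at h
    have h2 := huniq _ _ h
    have hcb0 : cb = 0 := by linear_combination (-2:ℂ) * h2
    rw [hcb, hcb0, zero_smul]
  -- the (*) identity
  have hstar : ∀ x ∈ A1, ∀ y ∈ A1, ∀ fx fy Bxy : ℂ,
      T x = fx • ε → T y = fy • ε → mul x y = Bxy • ε →
      Bxy • b = fx • mul ε y - fy • mul ε x := by
    intro x hx y hy fx fy Bxy hfx hfy hBxy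
    have h := hLeib1 x hx y
    rw [hBxy, map_smul, ← hbdef, hfx, hfy, mull, mulr] at h
    rw [← hcomm0 ε hεA0 x] at h
    exact h
  -- Step B : the odd bilinear form is nonzero
  have hBne : ∃ x ∈ A1, ∃ y ∈ A1, mul x y ≠ 0 := by
    by_contra hc
    push_neg at hc
    have hideal : ∀ x ∈ A1, ∀ y : A, mul x y ∈ A1 ∧ mul y x ∈ A1 := by
      intro x hx y
      obtain ⟨y0, hy0, y1, hy1, rfl⟩ := hdecomp y
      constructor
      · rw [map_add]
        exact Submodule.add_mem _ (h10 x hx y0 hy0) (by rw [hc x hx y1 hy1]; exact Submodule.zero_mem _)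
      · rw [muladdl]
        exact Submodule.add_mem _ (h01 y0 hy0 x hx) (by rw [hc y1 hy1 x hx]; exact Submodule.zero_mem _)
    rcases hsimple A1 hideal with h | h
    · -- A1 = ⊥ : then T = 0
      apply hTne
      have hA0top : ∀ x : A, x ∈ A0 := by
        intro x
        obtain ⟨x0, hx0, x1, hx1, rfl⟩ := hdecomp x
        rw [h] at hx1
        simp only [Submodule.mem_bot] at hx1
        rw [hx1, add_zero]; exact hx0
      ext x
      obtain ⟨c, hc'⟩ := hscal x (hA0top x)
      have : T x ∈ A1 := hT0 x (hA0top x)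
      rw [h] at this
      simpa using this
    · -- A1 = ⊤ : then ε ∈ A1 ∩ A0 so ε = 0
      exact hε0 (hdisj ε hεA0 (by rw [h]; trivial))
  -- b ≠ 0
  have hbne : b ≠ 0 := by
    intro hb
    -- T is nonzero on A1
    have hfex : ∃ x ∈ A1, T x ≠ 0 := by
      by_contra hc
      push_neg at hc
      apply hTne
      ext x
      obtain ⟨x0, hx0, x1, hx1, rfl⟩ := hdecomp x
      obtain ⟨c, rfl⟩ := hscal x0 hx0
      rw [map_add, map_smul, ← hbdef, hb, hc x1 hx1, smul_zero, add_zero]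
      rfl
    obtain ⟨a1, ha1, hTa1⟩ := hfex
    obtain ⟨c1, hc1⟩ := hscal _ (hT1 a1 ha1)
    have hc1ne : c1 ≠ 0 := by
      intro h; rw [h, zero_smul] at hc1; exact hTa1 hc1
    set a' := c1⁻¹ • a1 with ha'def
    have ha'1 : a' ∈ A1 := Submodule.smul_mem _ _ ha1
    have hTa' : T a' = (1:ℂ) • ε := by
      rw [ha'def, map_smul, hc1, smul_smul, inv_mul_cancel₀ hc1ne, one_smul]
    set c := mul ε a' with hcdef
    have hcA1 : c ∈ A1 := h01 ε hεA0 a' ha'1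
    have hkey : ∀ y ∈ A1, ∃ fy : ℂ, T y = fy • ε ∧ mul ε y = fy • c := by
      intro y hy
      obtain ⟨fy, hfy⟩ := hscal _ (hT1 y hy)
      obtain ⟨By, hBy⟩ := hscal _ (h11 a' ha'1 y hy)
      have h := hstar a' ha'1 y hy 1 fy By hTa' hfy hBy
      rw [hb, smul_zero] at h
      have h2 : (1:ℂ) • mul ε y = fy • mul ε a' := by
        rw [← sub_eq_zero]; exact h.symm
      rw [one_smul] at h2
      exact ⟨fy, hfy, h2⟩
    set I := Submodule.span ℂ {ε, c} with hIdef
    have hεI : ε ∈ I := Submodule.subset_span (by simp)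
    have hcI : c ∈ I := Submodule.subset_span (by simp)
    have hA0I : A0 ≤ I := by
      rw [hA0]; exact Submodule.span_mono (by simp)
    have hideal : ∀ x ∈ I, ∀ y : A, mul x y ∈ I ∧ mul y x ∈ I := by
      intro x hx y
      induction hx using Submodule.span_induction with
      | mem z hz =>
        obtain ⟨y0, hy0, y1, hy1, rfl⟩ := hdecomp y
        simp only [Set.mem_insert_iff, Set.mem_singleton_iff] at hz
        rcases hz with hz | hz <;> rw [hz]
        · constructor
          · rw [map_add]
            refine Submodule.add_mem _ (hA0I (h00 ε hεA0 y0 hy0)) ?_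
            obtain ⟨fy, _, h2⟩ := hkey y1 hy1
            rw [h2]; exact Submodule.smul_mem _ _ hcI
          · rw [← hcomm0 ε hεA0 (y0 + y1), map_add]
            refine Submodule.add_mem _ (hA0I (h00 ε hεA0 y0 hy0)) ?_
            obtain ⟨fy, _, h2⟩ := hkey y1 hy1
            rw [h2]; exact Submodule.smul_mem _ _ hcI
        · obtain ⟨fc, _, hfc⟩ := hkey c hcA1
          obtain ⟨t, rfl⟩ := hscal y0 hy0
          have hzy0 : mul c (t • ε) ∈ I := by
            rw [mulr, ← hcomm0 ε hεA0 c, hfc, smul_smul]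
            exact Submodule.smul_mem _ _ hcI
          have hzy1 : mul c y1 ∈ I := hA0I (h11 c hcA1 y1 hy1)
          constructor
          · rw [map_add]; exact Submodule.add_mem _ hzy0 hzy1
          · rw [muladdl]
            refine Submodule.add_mem _ ?_ ?_
            · rw [hcomm0 (t • ε) (Submodule.smul_mem _ _ hεA0) c]; exact hzy0
            · rw [hcomm1 y1 hy1 c hcA1]; exact Submodule.neg_mem _ hzy1
      | zero => simp
      | add u v hu hv ihu ihv =>
        exact ⟨by rw [muladdl]; exact Submodule.add_mem _ ihu.1 ihv.1,
               by rw [map_add]; exact Submodule.add_mem _ ihu.2 ihv.2⟩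
      | smul t u hu ihu =>
        exact ⟨by rw [mull]; exact Submodule.smul_mem _ _ ihu.1,
               by rw [mulr]; exact Submodule.smul_mem _ _ ihu.2⟩
    have hItop : I = ⊤ := by
      rcases hsimple I hideal with h | h
      · exfalso; apply hε0; rw [← Submodule.mem_bot (R := ℂ) (M := A), ← h]; exact hεI
      · exact h
    -- every element of A1 is a multiple of c
    have hmult : ∀ x ∈ A1, ∃ t : ℂ, x = t • c := by
      intro x hx
      have : x ∈ I := by rw [hItop]; trivial
      rw [hIdef] at this
      obtain ⟨s, t, hst⟩ := Submodule.mem_span_pair.mp this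
      have h1 : s • ε = x - t • c := by rw [← hst]; abel
      have h2 : s • ε = 0 :=
        hdisj _ (Submodule.smul_mem _ _ hεA0)
          (by rw [h1]; exact Submodule.sub_mem _ hx (Submodule.smul_mem _ _ hcA1))
      rw [h2] at h1
      exact ⟨t, sub_eq_zero.mp h1.symm⟩
    obtain ⟨x, hx, y, hy, hxy⟩ := hBne
    obtain ⟨t, rfl⟩ := hmult x hx
    obtain ⟨t', rfl⟩ := hmult y hy
    apply hxy
    rw [mull, mulr, sqzero c hcA1, smul_zero, smul_zero]
  -- cancellation with b
  have hbuniq : ∀ c c' : ℂ, c • b = c' • b → c = c' := by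
    intro c c' h
    have : (c - c') • b = 0 := by rw [sub_smul, h, sub_self]
    rcases smul_eq_zero.mp this with h | h
    · exact sub_eq_zero.mp h
    · exact absurd h hbne
  -- T is nonzero somewhere on A1
  have hfex2 : ∃ x ∈ A1, T x ≠ 0 := by
    by_contra hc
    push_neg at hc
    obtain ⟨x, hx, y, hy, hxy⟩ := hBne
    obtain ⟨Bxy, hBxy⟩ := hscal _ (h11 x hx y hy)
    have h := hstar x hx y hy 0 0 Bxy (by rw [hc x hx, zero_smul]) (by rw [hc y hy, zero_smul]) hBxy
    rw [zero_smul, zero_smul, sub_zero] at h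
    have : Bxy = 0 := by
      have h0 : Bxy • b = (0:ℂ) • b := by rw [h, zero_smul]
      exact hbuniq _ _ h0
    apply hxy; rw [hBxy, this, zero_smul]
  obtain ⟨a0, ha0, hTa0⟩ := hfex2
  obtain ⟨c0, hc0⟩ := hscal _ (hT1 a0 ha0)
  have hc0ne : c0 ≠ 0 := by intro h; rw [h, zero_smul] at hc0; exact hTa0 hc0
  obtain ⟨a, hadef⟩ : ∃ w : A, w = (2 * c0⁻¹) • a0 := ⟨_, rfl⟩
  have haA1 : a ∈ A1 := hadef ▸ Submodule.smul_mem _ _ ha0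
  have hTa : T a = (2:ℂ) • ε := by
    rw [hadef, map_smul, hc0, smul_smul, mul_assoc, inv_mul_cancel₀ hc0ne, mul_one]
  have hab : mul a b = ε := by
    obtain ⟨Bab, hBab⟩ := hscal _ (h11 a haA1 b hbA1)
    have h := hstar a haA1 b hbA1 2 0 Bab hTa (by rw [hTb, zero_smul]) hBab
    rw [zero_smul, sub_zero, hLb, smul_smul] at h
    norm_num at h
    have : Bab = 1 := hbuniq _ _ (by rw [h, one_smul])
    rw [hBab, this, one_smul]
  have hba : mul b a = -ε := by
    rw [hcomm1 b hbA1 a haA1, hab]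
  obtain ⟨u, hudef⟩ : ∃ w : A, w = mul ε a := ⟨_, rfl⟩
  have huA1 : u ∈ A1 := hudef ▸ h01 ε hεA0 a haA1
  have hTu : T u = ε := by
    have h := hLeib0 ε hεA0 a
    rw [← hudef, hTa, ← hbdef, hba, mulr, hεsq, two_smul] at h
    rw [h]; abel
  -- key formula for mul ε y
  have hkey2 : ∀ y ∈ A1, ∀ fy By : ℂ, T y = fy • ε → mul y a = By • ε →
      mul ε y = ((1:ℂ)/2 * fy) • u - ((1:ℂ)/2 * By) • b := by
    intro y hy fy By hfy hBy
    have h := hstar y hy a haA1 fy 2 By hfy hTa hBy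
    rw [← hudef] at h
    -- h : By • b = fy • u - 2 • mul ε y
    rw [eq_sub_iff_add_eq] at h
    have h2 : (2:ℂ) • mul ε y = fy • u - By • b := by
      rw [eq_sub_iff_add_eq, add_comm]; exact h
    have h3 := congrArg (fun z => (2⁻¹:ℂ) • z) h2
    simp only [smul_smul, smul_sub] at h3
    norm_num at h3
    exact h3
  -- the span of ε, u, b is an ideal, hence everything
  have hkey2' : ∀ y ∈ A1, ∃ f B : ℂ, mul ε y = ((1:ℂ)/2 * f) • u - ((1:ℂ)/2 * B) • b := by
    intro y hy
    obtain ⟨fy, hfy⟩ := hscal _ (hT1 y hy)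
    obtain ⟨By, hBy⟩ := hscal _ (h11 y hy a haA1)
    exact ⟨fy, By, hkey2 y hy fy By hfy hBy⟩
  set I := Submodule.span ℂ ({ε, u, b} : Set A) with hIdef
  have hεI : ε ∈ I := Submodule.subset_span (by simp)
  have huI : u ∈ I := Submodule.subset_span (by simp)
  have hbI : b ∈ I := Submodule.subset_span (by simp)
  have hA0I : A0 ≤ I := by
    rw [hA0]; exact Submodule.span_mono (by simp)
  have hεyI : ∀ y ∈ A1, mul ε y ∈ I := by
    intro y hy
    obtain ⟨f, B, h⟩ := hkey2' y hy
    rw [h]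
    exact Submodule.sub_mem _ (Submodule.smul_mem _ _ huI) (Submodule.smul_mem _ _ hbI)
  have hideal : ∀ x ∈ I, ∀ y : A, mul x y ∈ I ∧ mul y x ∈ I := by
    intro x hx y
    induction hx using Submodule.span_induction with
    | mem z hz =>
      obtain ⟨y0, hy0, y1, hy1, rfl⟩ := hdecomp y
      obtain ⟨t, rfl⟩ := hscal y0 hy0
      simp only [Set.mem_insert_iff, Set.mem_singleton_iff] at hz
      have main : ∀ w ∈ A1, w ∈ I → mul ε w ∈ I → mul w (t • ε + y1) ∈ I ∧ mul (t • ε + y1) w ∈ I := by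
        intro w hw hwI hεwI
        have h1 : mul w (t • ε) ∈ I := by
          rw [mulr, ← hcomm0 ε hεA0 w]
          exact Submodule.smul_mem _ _ hεwI
        have h2 : mul w y1 ∈ I := hA0I (h11 w hw y1 hy1)
        constructor
        · rw [map_add]; exact Submodule.add_mem _ h1 h2
        · rw [muladdl]
          refine Submodule.add_mem _ ?_ ?_
          · rw [hcomm0 (t • ε) (Submodule.smul_mem _ _ hεA0) w]; exact h1
          · rw [hcomm1 y1 hy1 w hw]; exact Submodule.neg_mem _ h2
      rcases hz with hz | hz | hz <;> rw [hz]
      · -- generator ε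
        constructor
        · rw [map_add]
          refine Submodule.add_mem _ ?_ (hεyI y1 hy1)
          rw [mulr, hεsq]; exact Submodule.smul_mem _ _ hεI
        · rw [← hcomm0 ε hεA0 (t • ε + y1), map_add]
          refine Submodule.add_mem _ ?_ (hεyI y1 hy1)
          rw [mulr, hεsq]; exact Submodule.smul_mem _ _ hεI
      · exact main u huA1 huI (hεyI u huA1)
      · exact main b hbA1 hbI (hεyI b hbA1)
    | zero => simp
    | add p q hp hq ihp ihq =>
      exact ⟨by rw [muladdl]; exact Submodule.add_mem _ ihp.1 ihq.1,
             by rw [map_add]; exact Submodule.add_mem _ ihp.2 ihq.2⟩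
    | smul t p hp ihp =>
      exact ⟨by rw [mull]; exact Submodule.smul_mem _ _ ihp.1,
             by rw [mulr]; exact Submodule.smul_mem _ _ ihp.2⟩
  have hItop : I = ⊤ := by
    rcases hsimple I hideal with h | h
    · exfalso; apply hε0; rw [← Submodule.mem_bot (R := ℂ) (M := A), ← h]; exact hεI
    · exact h
  -- coordinates of a in {ε, u, b}
  have haI : a ∈ I := by rw [hItop]; trivial
  rw [hIdef, Submodule.mem_span_insert] at haI
  obtain ⟨s, z, hz, hsz⟩ := haI
  obtain ⟨p, q, hpq⟩ := Submodule.mem_span_pair.mp hz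
  rw [← hpq] at hsz
  -- hsz : a = s • ε + (p • u + q • b)
  have hs0 : s = 0 := by
    have h1 : s • ε = a - (p • u + q • b) := by rw [hsz]; abel
    have h2 : s • ε = 0 :=
      hdisj _ (Submodule.smul_mem _ _ hεA0)
        (by rw [h1]
            exact Submodule.sub_mem _ haA1
              (Submodule.add_mem _ (Submodule.smul_mem _ _ huA1) (Submodule.smul_mem _ _ hbA1)))
    rcases smul_eq_zero.mp h2 with h | h
    · exact h
    · exact absurd h hε0
  rw [hs0, zero_smul, zero_add] at hsz
  -- hsz : a = p • u + q • b
  have hp2 : p = 2 := by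
    have h1 : T a = p • ε := by
      rw [hsz, map_add, map_smul, map_smul, hTu, hTb, smul_zero, add_zero]
    rw [hTa] at h1
    exact huniq _ _ h1.symm
  rw [hp2] at hsz
  -- mul ε a = u, and u = (1/2) a - (q/2) b
  have hu_eq : u = ((1:ℂ)/2) • a - ((1:ℂ)/2 * q) • b := by
    rw [hsz]; module
  have hspan : Submodule.span ℂ ({ε, a, b} : Set A) = ⊤ := by
    refine le_antisymm le_top ?_
    rw [← hItop, hIdef]
    refine Submodule.span_le.mpr ?_
    intro w hw
    simp only [Set.mem_insert_iff, Set.mem_singleton_iff] at hw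
    rcases hw with rfl | rfl | rfl
    · exact Submodule.subset_span (by simp)
    · rw [hu_eq]
      exact Submodule.sub_mem _
        (Submodule.smul_mem _ _ (Submodule.subset_span (by simp)))
        (Submodule.smul_mem _ _ (Submodule.subset_span (by simp)))
    · exact Submodule.subset_span (by simp)
  obtain ⟨μ, hμdef⟩ : ∃ m : ℂ, m = -((1:ℂ)/2 * q) := ⟨_, rfl⟩
  have hma : mul ε a = ((1:ℂ)/2) • a + μ • b := by
    rw [← hudef, hu_eq, hμdef]; module
  -- produce the normalized basis
  obtain ⟨lam, hlam01, a', b', ha'1, hb'1, hεa', hεb', ha'b', hspan'⟩ :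
      ∃ lam : ℂ, (lam = 0 ∨ lam = 1) ∧ ∃ a' b' : A, a' ∈ A1 ∧ b' ∈ A1 ∧
        mul ε a' = ((1:ℂ)/2) • a' ∧ mul ε b' = ((1:ℂ)/2) • b' + lam • a' ∧
        mul a' b' = ε ∧ Submodule.span ℂ ({ε, a', b'} : Set A) = ⊤ := by
    by_cases hμ : μ = 0
    · refine ⟨0, Or.inl rfl, a, b, haA1, hbA1, ?_, ?_, hab, hspan⟩
      · rw [hma, hμ]; module
      · rw [hLb]; module
    · obtain ⟨γ, hγ⟩ := IsAlgClosed.exists_pow_nat_eq (-μ⁻¹) (n := 2) (by norm_num)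
      have hγ2 : γ * γ * μ = -1 := by
        have h : γ * γ = -μ⁻¹ := by rw [← hγ]; ring
        rw [h, neg_mul, inv_mul_cancel₀ hμ]
      have hγne : γ ≠ 0 := by
        intro h; rw [h] at hγ
        have : μ⁻¹ = 0 := by linear_combination hγ
        exact hμ (inv_eq_zero.mp this)
      have hγμne : γ * μ ≠ 0 := mul_ne_zero hγne hμ
      refine ⟨1, Or.inr rfl, (γ * μ) • b, γ • a,
        Submodule.smul_mem _ _ hbA1, Submodule.smul_mem _ _ haA1, ?_, ?_, ?_, ?_⟩
      · rw [mulr, hLb]; module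
      · rw [mulr, hma]; module
      · rw [mull, mulr, hcomm1 b hbA1 a haA1, hab]
        have hcoef : -(γ * μ * γ) = (1:ℂ) := by linear_combination -hγ2
        calc (γ * μ) • γ • (-ε) = (-(γ * μ * γ)) • ε := by module
          _ = ε := by rw [hcoef, one_smul]
      · refine le_antisymm le_top ?_
        rw [← hspan]
        refine Submodule.span_le.mpr ?_
        intro w hw
        simp only [Set.mem_insert_iff, Set.mem_singleton_iff] at hw
        rcases hw with hw | hw | hw <;> rw [hw]
        · exact Submodule.subset_span (by simp)
        · have h2 := Submodule.smul_mem (Submodule.span ℂ ({ε, (γ * μ) • b, γ • a} : Set A)) γ⁻¹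
            (Submodule.subset_span (show γ • a ∈ _ by simp))
          rwa [smul_smul, inv_mul_cancel₀ hγne, one_smul] at h2
        · have h2 := Submodule.smul_mem (Submodule.span ℂ ({ε, (γ * μ) • b, γ • a} : Set A)) (γ * μ)⁻¹
            (Submodule.subset_span (show (γ * μ) • b ∈ _ by simp))
          rwa [smul_smul, inv_mul_cancel₀ hγμne, one_smul] at h2
  -- multiplication table
  have m10 : mul a' ε = ((1:ℂ)/2) • a' := by rw [← hcomm0 ε hεA0 a', hεa']
  have m20 : mul b' ε = ((1:ℂ)/2) • b' + lam • a' := by rw [← hcomm0 ε hεA0 b', hεb']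
  have m11 : mul a' a' = 0 := sqzero a' ha'1
  have m22 : mul b' b' = 0 := sqzero b' hb'1
  have m21 : mul b' a' = -ε := by rw [hcomm1 b' hb'1 a' ha'1, ha'b']
  -- linear independence of ε, a', b'
  have hb'ne : b' ≠ 0 := by
    intro h
    rw [h, map_zero] at ha'b'
    exact hε0 ha'b'.symm
  have hli : LinearIndependent ℂ ![ε, a', b'] := by
    rw [Fintype.linearIndependent_iff]
    intro g hg
    rw [Fin.sum_univ_three] at hg
    simp only [Matrix.cons_val_zero, Matrix.cons_val_one, Matrix.head_cons,
      Matrix.cons_val_two, Matrix.tail_cons] at hg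
    have hmem : g 0 • ε = 0 := by
      refine hdisj _ (Submodule.smul_mem _ _ hεA0) ?_
      rw [add_assoc] at hg
      have h1 : g 0 • ε = -(g 1 • a' + g 2 • b') := eq_neg_of_add_eq_zero_left hg
      rw [h1]
      exact Submodule.neg_mem _
        (Submodule.add_mem _ (Submodule.smul_mem _ _ ha'1) (Submodule.smul_mem _ _ hb'1))
    have hg0 : g 0 = 0 := by
      rcases smul_eq_zero.mp hmem with h | h
      · exact h
      · exact absurd h hε0
    rw [hmem, zero_add] at hg
    have h3 := congrArg (fun z => mul z b') hg
    rw [muladdl, mull, mull, ha'b', m22, smul_zero, add_zero] at h3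
    have h4 : mul (0:A) b' = 0 := by rw [map_zero]; rfl
    rw [h4] at h3
    have hg1 : g 1 = 0 := by
      rcases smul_eq_zero.mp h3 with h | h
      · exact h
      · exact absurd h hε0
    rw [hg1, zero_smul, zero_add] at hg
    have hg2 : g 2 = 0 := by
      rcases smul_eq_zero.mp hg with h | h
      · exact h
      · exact absurd h hb'ne
    intro i
    fin_cases i
    · exact hg0
    · exact hg1
    · exact hg2
  have hrange : Set.range ![ε, a', b'] = ({ε, a', b'} : Set A) := by
    ext w
    simp [Matrix.range_cons, Matrix.range_empty]
    tauto
  set B3 : Module.Basis (Fin 3) ℂ A :=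
    Module.Basis.mk hli (by rw [hrange, hspan']) with hB3def
  have hB0 : B3 0 = ε := by rw [hB3def, Module.Basis.mk_apply]; rfl
  have hB1 : B3 1 = a' := by rw [hB3def, Module.Basis.mk_apply]; rfl
  have hB2 : B3 2 = b' := by rw [hB3def, Module.Basis.mk_apply]; rfl
  set e : A ≃ₗ[ℂ] ℂ × ℂ × ℂ := B3.equivFun.trans tripleEquiv with hedef
  have heval : ∀ i : Fin 3, e (B3 i) =
      ((if i = 0 then (1:ℂ) else 0), (if i = 1 then (1:ℂ) else 0), (if i = 2 then (1:ℂ) else 0)) := by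
    intro i
    show tripleEquiv (B3.equivFun (B3 i)) = _
    have h : B3.equivFun (B3 i) = fun j => if i = j then (1:ℂ) else 0 :=
      funext fun j => B3.equivFun_self i j
    rw [h]
    rfl
  have he0 : e ε = ((1:ℂ), (0:ℂ), (0:ℂ)) := by
    rw [← hB0, heval 0]; norm_num [Fin.ext_iff]
  have heA : e a' = ((0:ℂ), (1:ℂ), (0:ℂ)) := by
    rw [← hB1, heval 1]; norm_num [Fin.ext_iff]
  have heB : e b' = ((0:ℂ), (0:ℂ), (1:ℂ)) := by
    rw [← hB2, heval 2]; norm_num [Fin.ext_iff]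
  refine ⟨lam, hlam01, e, ?_⟩
  intro x y
  have hex : e x = (B3.equivFun x 0, B3.equivFun x 1, B3.equivFun x 2) := rfl
  have hey : e y = (B3.equivFun y 0, B3.equivFun y 1, B3.equivFun y 2) := rfl
  have hx : x = B3.equivFun x 0 • ε + B3.equivFun x 1 • a' + B3.equivFun x 2 • b' := by
    have h := B3.sum_equivFun x
    rw [Fin.sum_univ_three, hB0, hB1, hB2] at h
    exact h.symm
  have hy : y = B3.equivFun y 0 • ε + B3.equivFun y 1 • a' + B3.equivFun y 2 • b' := by
    have h := B3.sum_equivFun y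
    rw [Fin.sum_univ_three, hB0, hB1, hB2] at h
    exact h.symm
  conv_lhs => rw [hx, hy]
  rw [hex, hey]
  simp only [map_add, map_smul, LinearMap.add_apply, LinearMap.smul_apply,
    hεsq, hεa', hεb', m10, m20, m11, m22, ha'b', m21,
    smul_add, smul_smul, smul_zero, smul_neg, add_zero, zero_add,
    map_neg, he0, heA, heB]
  simp only [K3mulC, Prod.ext_iff, Prod.smul_def, Prod.fst_add, Prod.snd_add,
    Prod.fst_neg, Prod.snd_neg, smul_eq_mul, Prod.mk.injEq]
  norm_num
  refine ⟨by ring, by ring, by ring⟩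


end Main

theorem part2 :
    ¬∃ e : (ℂ × ℂ × ℂ) ≃ₗ[ℂ] ℂ × ℂ × ℂ,
      ∀ x y : ℂ × ℂ × ℂ, e (K3mulC 0 x y) = K3mulC 1 (e x) (e y) := by
  rintro ⟨e, he⟩
  obtain ⟨⟨u1, u2, u3⟩, hu⟩ : ∃ u, e (0,1,0) = u := ⟨_, rfl⟩
  obtain ⟨⟨v1, v2, v3⟩, hv⟩ : ∃ v, e (0,0,1) = v := ⟨_, rfl⟩
  obtain ⟨⟨p1, p2, p3⟩, hp⟩ : ∃ p, e (1,0,0) = p := ⟨_, rfl⟩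
  have h1 := he (0,1,0) (0,1,0)
  have e1 : K3mulC 0 ((0:ℂ),(1:ℂ),(0:ℂ)) (0,1,0) = 0 := by
    simp [K3mulC, Prod.ext_iff]
  rw [e1, map_zero, hu] at h1
  simp only [K3mulC, Prod.ext_iff, Prod.mk.injEq, Prod.fst_zero, Prod.snd_zero] at h1
  have hu1 : u1 = 0 := mul_self_eq_zero.mp (by linear_combination -h1.1)
  have h2 := he (0,0,1) (0,0,1)
  have e2 : K3mulC 0 ((0:ℂ),(0:ℂ),(1:ℂ)) (0,0,1) = 0 := by
    simp [K3mulC, Prod.ext_iff]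
  rw [e2, map_zero, hv] at h2
  simp only [K3mulC, Prod.ext_iff, Prod.mk.injEq, Prod.fst_zero, Prod.snd_zero] at h2
  have hv1 : v1 = 0 := mul_self_eq_zero.mp (by linear_combination -h2.1)
  have h3 := he (0,1,0) (0,0,1)
  have e3 : K3mulC 0 ((0:ℂ),(1:ℂ),(0:ℂ)) (0,0,1) = (1,0,0) := by
    simp [K3mulC, Prod.ext_iff]
  rw [e3, hu, hv, hp] at h3
  simp only [K3mulC, Prod.ext_iff, Prod.mk.injEq] at h3
  obtain ⟨hp1, hp2, hp3⟩ := h3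
  have hp2' : p2 = 0 := by rw [hp2, hu1, hv1]; ring
  have hp3' : p3 = 0 := by rw [hp3, hu1, hv1]; ring
  have h4 := he (1,0,0) (1,0,0)
  have e4 : K3mulC 0 ((1:ℂ),(0:ℂ),(0:ℂ)) (1,0,0) = (1,0,0) := by
    simp [K3mulC, Prod.ext_iff]
  rw [e4, hp] at h4
  simp only [K3mulC, Prod.ext_iff, Prod.mk.injEq] at h4
  have hpsq : p1 = p1 * p1 := by linear_combination h4.1
  have hpne : p1 ≠ 0 := by
    intro h0
    have h5 : e (1,0,0) = e 0 := by
      rw [map_zero, hp, h0, hp2', hp3']; rfl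
    have := e.injective h5
    simp [Prod.ext_iff] at this
  have hP1 : p1 = 1 := by
    have : p1 * (p1 - 1) = 0 := by linear_combination -hpsq
    rcases mul_eq_zero.mp this with h | h
    · exact absurd h hpne
    · linear_combination h
  -- ε·a' = a'/2
  have h5 := he (1,0,0) (0,1,0)
  have e5 : K3mulC 0 ((1:ℂ),(0:ℂ),(0:ℂ)) (0,1,0) = (1/2 : ℂ) • (0,1,0) := by
    simp [K3mulC, Prod.ext_iff]
  rw [e5, map_smul, hu, hp] at h5
  simp only [K3mulC, Prod.ext_iff, Prod.mk.injEq, Prod.smul_def, smul_eq_mul] at h5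
  have hu3 : u3 = 0 := by
    have := h5.2.1
    rw [hP1, hp2', hp3', hu1] at this
    linear_combination -this
  have h6 := he (1,0,0) (0,0,1)
  have e6 : K3mulC 0 ((1:ℂ),(0:ℂ),(0:ℂ)) (0,0,1) = (1/2 : ℂ) • (0,0,1) := by
    simp [K3mulC, Prod.ext_iff]
  rw [e6, map_smul, hv, hp] at h6
  simp only [K3mulC, Prod.ext_iff, Prod.mk.injEq, Prod.smul_def, smul_eq_mul] at h6
  have hv3 : v3 = 0 := by
    have := h6.2.1
    rw [hP1, hp2', hp3', hv1] at this
    linear_combination -this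
  rw [hu1, hv1, hu3, hv3, hP1] at hp1
  simp at hp1


/-- Up to isomorphism there are exactly two simple ℤ/2-graded
commutative algebras over ℂ with even part `A⁰ = ℂ·ε` admitting a nontrivial odd
derivation: the tiny Kaplansky superalgebra `K₃` (`ε·b = (1/2)b`) and its deformation
with `ε·b = (1/2)b + a`; both are 3-dimensional with basis `{ε; a, b}`,
`ε·a = (1/2)a` and `a·b = ε`.  (Any such algebra is isomorphic to one of the two,
and the two are not isomorphic to each other.) -/
theorem stmt16 {A : Type*} [AddCommGroup A] [Module ℂ A]
    (mul : A →ₗ[ℂ] A →ₗ[ℂ] A)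
    (A0 A1 : Submodule ℂ A) (hcompl : IsCompl A0 A1)
    (h00 : ∀ x ∈ A0, ∀ y ∈ A0, mul x y ∈ A0)
    (h01 : ∀ x ∈ A0, ∀ y ∈ A1, mul x y ∈ A1)
    (h10 : ∀ x ∈ A1, ∀ y ∈ A0, mul x y ∈ A1)
    (h11 : ∀ x ∈ A1, ∀ y ∈ A1, mul x y ∈ A0)
    (hcomm0 : ∀ x ∈ A0, ∀ y : A, mul x y = mul y x)
    (hcomm1 : ∀ x ∈ A1, ∀ y ∈ A1, mul x y = -mul y x)
    (ε : A) (hε0 : ε ≠ 0) (hA0 : A0 = Submodule.span ℂ {ε})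
    (hεsq : mul ε ε = ε)
    (hsimple : ∀ I : Submodule ℂ A,
      (∀ x ∈ I, ∀ y : A, mul x y ∈ I ∧ mul y x ∈ I) → I = ⊥ ∨ I = ⊤)
    (T : A →ₗ[ℂ] A)
    (hT0 : ∀ x ∈ A0, T x ∈ A1) (hT1 : ∀ x ∈ A1, T x ∈ A0)
    (hLeib0 : ∀ x ∈ A0, ∀ y : A, T (mul x y) = mul (T x) y + mul x (T y))
    (hLeib1 : ∀ x ∈ A1, ∀ y : A, T (mul x y) = mul (T x) y - mul x (T y))
    (hTne : T ≠ 0) :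
    (∃ lam : ℂ, (lam = 0 ∨ lam = 1) ∧
      ∃ e : A ≃ₗ[ℂ] ℂ × ℂ × ℂ, ∀ x y : A, e (mul x y) = K3mulC lam (e x) (e y)) ∧
    ¬∃ e : (ℂ × ℂ × ℂ) ≃ₗ[ℂ] ℂ × ℂ × ℂ,
      ∀ x y : ℂ × ℂ × ℂ, e (K3mulC 0 x y) = K3mulC 1 (e x) (e y) := by
  exact ⟨part1 mul A0 A1 hcompl h00 h01 h10 h11 hcomm0 hcomm1 ε hε0 hA0 hεsq
    hsimple T hT0 hT1 hLeib0 hLeib1 hTne, part2⟩
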